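/- Let Σ be a type, w : ℕ → Option Σ, ζ : Σ, u : ℕ with w u ≠ some ζ, and let w' := Function.update w u (some ζ). Suppose x₁ ≤ y₁ < x₂ ≤ y₂ and w[x₁,y₁] = w[x₂,y₂]. If x₁ < u < y₁ or x₂ < u < y₂, then w'[x₁,y₁] ≠ w'[x₂,y₂]. (Lemma A.3 of the paper: an insertion strictly inside one of two disjoint intervals carrying equal subwords destroys the equality.) -/

import Mathlib

/-- The subword of `w` between positions `i` and `j` (inclusive). -/
def subword {α : Type*} (w : ℕ → Option α) (i j : ℕ) : List α :=
  (List.range' i (j + 1 - i)).filterMap w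

lemma subword_update_not_mem {α : Type*} (w : ℕ → Option α) (v : Option α) (u i j : ℕ)
    (h : u < i ∨ j < u) : subword (Function.update w u v) i j = subword w i j := by
  unfold subword
  apply List.filterMap_congr
  intro k hk
  rw [List.mem_range'_1] at hk
  have : k ≠ u := by omega
  simp [Function.update_of_ne this]

lemma range'_split (u i j : ℕ) (h1 : i ≤ u) (h2 : u ≤ j) :
    List.range' i (j + 1 - i) =
      List.range' i (u - i) ++ u :: List.range' (u + 1) (j - u) := by
  have : (u : ℕ) :: List.range' (u + 1) (j - u) = List.range' u (j + 1 - u) := by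
    rw [show j + 1 - u = (j - u) + 1 by omega, List.range'_succ]
  rw [this]
  have h : List.range' i (u-i) 1 ++ List.range' (i + 1*(u-i)) (j+1-u) 1 = List.range' i ((j+1-u)+(u-i)) 1 :=
    List.range'_append.trans (by rw [Nat.add_comm (u-i)])
  simp only [one_mul] at h
  rw [show i + (u-i) = u by omega] at h
  rw [show j + 1 - i = (j+1-u) + (u-i) by omega, ← h]

lemma subword_split {α : Type*} (w : ℕ → Option α) (u i j : ℕ) (h1 : i ≤ u) (h2 : u ≤ j) :
    subword w i j = (List.range' i (u - i)).filterMap w ++ (w u).toList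
      ++ (List.range' (u + 1) (j - u)).filterMap w := by
  unfold subword
  rw [range'_split u i j h1 h2]
  simp only [List.filterMap_append, List.filterMap_cons]
  cases w u <;> simp

lemma subword_update_mem_ne {α : Type*} (w : ℕ → Option α) (ζ : α) (u i j : ℕ)
    (hu : w u ≠ some ζ) (h1 : i ≤ u) (h2 : u ≤ j) :
    subword (Function.update w u (some ζ)) i j ≠ subword w i j := by
  rw [subword_split _ u i j h1 h2, subword_split _ u i j h1 h2]
  have hpre : (List.range' i (u - i)).filterMap (Function.update w u (some ζ))
      = (List.range' i (u - i)).filterMap w := by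
    apply List.filterMap_congr
    intro k hk
    rw [List.mem_range'_1] at hk
    have : k ≠ u := by omega
    simp [Function.update_of_ne this]
  have hsuf : (List.range' (u+1) (j - u)).filterMap (Function.update w u (some ζ))
      = (List.range' (u+1) (j - u)).filterMap w := by
    apply List.filterMap_congr
    intro k hk
    rw [List.mem_range'_1] at hk
    have : k ≠ u := by omega
    simp [Function.update_of_ne this]
  rw [hpre, hsuf, Function.update_self]
  intro h
  have := List.append_cancel_left (List.append_cancel_right h)
  cases hw : w u with
  | none => rw [hw] at this; simp at this
  | some a => rw [hw] at this; simp at this; exact hu (by rw [hw, this])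

theorem insertion_inside_destroys_equality {α : Type*} (w : ℕ → Option α) (ζ : α)
    (u x₁ y₁ x₂ y₂ : ℕ) (hu : w u ≠ some ζ)
    (h₁ : x₁ ≤ y₁) (h₂ : y₁ < x₂) (h₃ : x₂ ≤ y₂)
    (heq : subword w x₁ y₁ = subword w x₂ y₂)
    (hin : (x₁ < u ∧ u < y₁) ∨ (x₂ < u ∧ u < y₂)) :
    subword (Function.update w u (some ζ)) x₁ y₁ ≠
      subword (Function.update w u (some ζ)) x₂ y₂ := by
  rcases hin with ⟨ha, hb⟩ | ⟨ha, hb⟩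
  · rw [subword_update_not_mem w _ u x₂ y₂ (by omega), ← heq]
    exact subword_update_mem_ne w ζ u x₁ y₁ hu (by omega) (by omega)
  · rw [subword_update_not_mem w _ u x₁ y₁ (by omega), heq]
    exact (subword_update_mem_ne w ζ u x₂ y₂ hu (by omega) (by omega)).symm
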